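/- Let G be a finite group with almost conjugate subgroups H and K, and let V be a finite-dimensional complex representation of G. Then dim V^H = dim V^K, where V^H denotes the subspace of H-fixed vectors. -/
import Mathlib


def AlmostConjugate {G : Type*} [Group G] (H K : Subgroup G) : Prop :=
  ∃ f : H ≃ K, ∀ h : H, IsConj (h : G) ((f h : K) : G)

/-- The submodule of H-fixed vectors of a representation. -/
def fixedSubmodule {k G V : Type*} [CommRing k] [Group G] [AddCommGroup V] [Module k V]
    (ρ : Representation k G V) (H : Subgroup G) : Submodule k V where
  carrier := {v | ∀ h ∈ H, ρ h v = v}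
  add_mem' := fun {a b} ha hb h hh => by simp [map_add, ha h hh, hb h hh]
  zero_mem' := fun h hh => map_zero _
  smul_mem' := fun c v hv h hh => by simp [map_smul, hv h hh]

lemma trace_avg_aux {G V : Type*} [Group G] [Fintype G] [AddCommGroup V] [Module ℂ V]
    [FiniteDimensional ℂ V] (ρ : Representation ℂ G V) [Invertible (Fintype.card G : ℂ)] :
    (Module.finrank ℂ ρ.invariants : ℂ) =
      ⅟(Fintype.card G : ℂ) • ∑ g : G, LinearMap.trace ℂ V (ρ g) := by
  rw [← ρ.isProj_averageMap.trace]
  simp only [Representation.averageMap, GroupAlgebra.average, map_smul, map_sum,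
    Representation.asAlgebraHom_of]

lemma trace_conj_eq {G V : Type*} [Group G] [AddCommGroup V] [Module ℂ V]
    [FiniteDimensional ℂ V] (ρ : Representation ℂ G V) {a b : G} (h : IsConj a b) :
    LinearMap.trace ℂ V (ρ a) = LinearMap.trace ℂ V (ρ b) := by
  obtain ⟨c, hc⟩ := h
  have hb : ρ b = ρ (c : G) * ρ a * ρ ((c : G)⁻¹) := by
    have h1 : b = (c : G) * a * (c : G)⁻¹ := by
      have h2 := hc.eq
      rw [h2]; group
    rw [h1, map_mul, map_mul]
  rw [hb, LinearMap.trace_mul_comm, ← mul_assoc, ← map_mul, inv_mul_cancel, map_one, one_mul]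

theorem finrank_fixed_eq_of_almostConjugate
    {G : Type*} [Group G] [Finite G] (H K : Subgroup G)
    (hHK : AlmostConjugate H K)
    {V : Type*} [AddCommGroup V] [Module ℂ V] [FiniteDimensional ℂ V]
    (ρ : Representation ℂ G V) :
    Module.finrank ℂ (fixedSubmodule ρ H) = Module.finrank ℂ (fixedSubmodule ρ K) := by
  obtain ⟨f, hf⟩ := hHK
  haveI : Fintype H := Fintype.ofFinite H
  haveI : Fintype K := Fintype.ofFinite K
  haveI : Invertible (Fintype.card H : ℂ) :=
    invertibleOfNonzero (Nat.cast_ne_zero.2 Fintype.card_ne_zero)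
  haveI : Invertible (Fintype.card K : ℂ) :=
    invertibleOfNonzero (Nat.cast_ne_zero.2 Fintype.card_ne_zero)
  let ρH : Representation ℂ H V := ρ.comp H.subtype
  let ρK : Representation ℂ K V := ρ.comp K.subtype
  have hH : fixedSubmodule ρ H = ρH.invariants := by
    ext v
    exact ⟨fun hv g => hv g.1 g.2, fun hv g hg => hv ⟨g, hg⟩⟩
  have hK : fixedSubmodule ρ K = ρK.invariants := by
    ext v
    exact ⟨fun hv g => hv g.1 g.2, fun hv g hg => hv ⟨g, hg⟩⟩
  have hcard : Fintype.card H = Fintype.card K := Fintype.card_congr f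
  have hsum : ∑ g : H, LinearMap.trace ℂ V (ρH g)
      = ∑ g : K, LinearMap.trace ℂ V (ρK g) := by
    refine Fintype.sum_equiv f _ _ fun h => ?_
    exact trace_conj_eq ρ (hf h)
  have key : (Module.finrank ℂ (fixedSubmodule ρ H) : ℂ)
      = (Module.finrank ℂ (fixedSubmodule ρ K) : ℂ) := by
    rw [hH, hK, trace_avg_aux, trace_avg_aux, hsum]
    rw [invOf_eq_inv, invOf_eq_inv, hcard]
  exact_mod_cast key
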